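/- For each fixed i ∈ {2, …, n}, the minimum of #S_x over x ∈ {A_i, A_i + 1, …, A_{i−1} − 1} equals #S_{A_i}. -/

import Mathlib

/-- A numerical semigroup: an additive submonoid of ℕ with finite complement. -/
def IsNumericalSemigroup (Γ : Set ℕ) : Prop :=
  0 ∈ Γ ∧ (∀ x ∈ Γ, ∀ y ∈ Γ, x + y ∈ Γ) ∧ Γᶜ.Finite

/-- The Apéry set Ap(Γ,x) = {s ∈ Γ : s - x ∉ Γ}. -/
def Ap (Γ : Set ℕ) (x : ℕ) : Set ℕ := {s ∈ Γ | ∀ t ∈ Γ, s ≠ t + x}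

/-- The inductive numerical semigroups Γ₀ = ℕ, Γᵢ = aᵢ·Γ_{i-1} ∪ (aᵢbᵢ + ℕ). -/
def IndSG (a b : ℕ → ℕ) : ℕ → Set ℕ
  | 0 => Set.univ
  | i + 1 => (fun x => a (i + 1) * x) '' IndSG a b i ∪ {x | a (i + 1) * b (i + 1) ≤ x}

namespace StmtAux

variable (a b : ℕ → ℕ)

lemma mem_top {m z : ℕ} (h : a (m + 1) * b (m + 1) ≤ z) : z ∈ IndSG a b (m + 1) :=
  Or.inr h

lemma mem_mul {m w : ℕ} (h : w ∈ IndSG a b m) : a (m + 1) * w ∈ IndSG a b (m + 1) :=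
  Or.inl ⟨w, h, rfl⟩

lemma lt_of_notMem {m z : ℕ} (h : z ∉ IndSG a b (m + 1)) : z < a (m + 1) * b (m + 1) := by
  by_contra hc
  exact h (Or.inr (show a (m + 1) * b (m + 1) ≤ z by omega))

lemma eq_mul_of_mem_lt {m z : ℕ} (hz : z ∈ IndSG a b (m + 1))
    (hlt : z < a (m + 1) * b (m + 1)) : ∃ w ∈ IndSG a b m, z = a (m + 1) * w := by
  rcases hz with ⟨w, hw, rfl⟩ | h
  · exact ⟨w, hw, rfl⟩
  · exact absurd h (by simp only [Set.mem_setOf_eq]; omega)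

lemma prod_mul_mem : ∀ (k l : ℕ), k ≤ l → ∀ s ∈ IndSG a b k,
    (∏ m ∈ Finset.Icc (k + 1) l, a m) * s ∈ IndSG a b l := by
  intro k l hkl
  induction l, hkl using Nat.le_induction with
  | base => intro s hs; simpa using hs
  | succ l hl ih =>
      intro s hs
      rw [Finset.prod_Icc_succ_top (by omega)]
      have : (∏ m ∈ Finset.Icc (k + 1) l, a m) * a (l + 1) * s
          = a (l + 1) * ((∏ m ∈ Finset.Icc (k + 1) l, a m) * s) := by ring
      rw [this]
      exact mem_mul a b (ih s hs)

lemma Efin (m x : ℕ) :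
    {t | t ∈ IndSG a b (m + 1) ∧ t + x ∉ IndSG a b (m + 1)}.Finite := by
  apply Set.Finite.subset (Set.finite_Iio (a (m + 1) * b (m + 1)))
  rintro t ⟨_, h⟩
  have := lt_of_notMem a b h
  simp only [Set.mem_Iio]
  omega

lemma Nfin (q : ℕ) : {s | s ∈ IndSG a b q ∧ s < b (q + 1)}.Finite := by
  apply Set.Finite.subset (Set.finite_Iio (b (q + 1)))
  rintro s ⟨_, h⟩
  exact h

variable {n : ℕ}

lemma bchain (ha : ∀ i, 1 ≤ i → i ≤ n → 2 ≤ a i)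
    (hb : ∀ i, 1 ≤ i → i + 1 ≤ n → a i * b i ≤ b (i + 1)) (q : ℕ) :
    ∀ j, q + 1 ≤ j → j ≤ n → (∏ k ∈ Finset.Ico (q + 1) j, a k) * b (q + 1) ≤ b j := by
  intro j hj
  induction j, hj using Nat.le_induction with
  | base => intro _; simp
  | succ j hj ih =>
      intro hjn
      rw [Finset.prod_Ico_succ_top (by omega)]
      have h1 : (∏ k ∈ Finset.Ico (q + 1) j, a k) * a j * b (q + 1)
          = a j * ((∏ k ∈ Finset.Ico (q + 1) j, a k) * b (q + 1)) := by ring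
      rw [h1]
      calc a j * ((∏ k ∈ Finset.Ico (q + 1) j, a k) * b (q + 1))
          ≤ a j * b j := Nat.mul_le_mul_left _ (ih (by omega))
        _ ≤ b (j + 1) := hb j (by omega) hjn

lemma LB (ha : ∀ i, 1 ≤ i → i ≤ n → 2 ≤ a i)
    (hb : ∀ i, 1 ≤ i → i + 1 ≤ n → a i * b i ≤ b (i + 1)) (q : ℕ) :
    ∀ j, q + 1 ≤ j → j ≤ n → ∀ y, 1 ≤ y →
      (∏ k ∈ Finset.Icc (q + 2) j, a k) ≤ y → y < ∏ k ∈ Finset.Icc (q + 1) j, a k →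
      {s | s ∈ IndSG a b q ∧ s < b (q + 1)}.ncard
        ≤ {t | t ∈ IndSG a b j ∧ t + y ∉ IndSG a b j}.ncard := by
  intro j hj
  induction j, hj using Nat.le_induction with
  | base =>
      intro hjn y hy1 _ hyu
      rw [Finset.Icc_self, Finset.prod_singleton] at hyu
      have haq : 2 ≤ a (q + 1) := ha (q + 1) (by omega) hjn
      have hinj : Function.Injective (fun s => a (q + 1) * s) :=
        mul_right_injective₀ (by omega)
      have hsub : (fun s => a (q + 1) * s) '' {s | s ∈ IndSG a b q ∧ s < b (q + 1)}
          ⊆ {t | t ∈ IndSG a b (q + 1) ∧ t + y ∉ IndSG a b (q + 1)} := by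
        rintro _ ⟨s, ⟨hsΓ, hsb⟩, rfl⟩
        refine ⟨mem_mul a b hsΓ, fun hmem => ?_⟩
        rcases hmem with ⟨w, hw, heq⟩ | htop
        · -- a*w = a*s + y with 1 ≤ y < a : impossible
          simp only at heq
          have hsw : s < w := by
            by_contra hc
            push_neg at hc
            have := Nat.mul_le_mul_left (a (q + 1)) hc
            omega
          have h2 := Nat.mul_le_mul_left (a (q + 1)) (show s + 1 ≤ w from hsw)
          have h3 : a (q + 1) * (s + 1) = a (q + 1) * s + a (q + 1) := by ring
          omega
        · simp only [Set.mem_setOf_eq] at htop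
          have h1 : s + 1 ≤ b (q + 1) := hsb
          have := Nat.mul_le_mul_left (a (q + 1)) h1
          have h2 : a (q + 1) * (s + 1) = a (q + 1) * s + a (q + 1) := by ring
          omega
      calc {s | s ∈ IndSG a b q ∧ s < b (q + 1)}.ncard
          = ((fun s => a (q + 1) * s) '' {s | s ∈ IndSG a b q ∧ s < b (q + 1)}).ncard :=
            (Set.ncard_image_of_injective _ hinj).symm
        _ ≤ _ := Set.ncard_le_ncard hsub (Efin a b q y)
  | succ j hj ih =>
      intro hjn y hy1 hyl hyu
      obtain ⟨m, rfl⟩ : ∃ m, j = m + 1 := ⟨j - 1, by omega⟩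
      rw [Finset.prod_Icc_succ_top (show q + 2 ≤ m + 1 + 1 by omega)] at hyl
      rw [Finset.prod_Icc_succ_top (show q + 1 ≤ m + 1 + 1 by omega)] at hyu
      have haj : 2 ≤ a (m + 2) := ha (m + 2) (by omega) hjn
      by_cases hdvd : a (m + 2) ∣ y
      · obtain ⟨y', rfl⟩ := hdvd
        have hy'1 : 1 ≤ y' := by
          rcases Nat.eq_zero_or_pos y' with h | h
          · subst h; simp at hy1
          · exact h
        have hyl' : (∏ k ∈ Finset.Icc (q + 2) (m + 1), a k) ≤ y' := by
          by_contra hc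
          push_neg at hc
          have : y' + 1 ≤ ∏ k ∈ Finset.Icc (q + 2) (m + 1), a k := hc
          have := Nat.mul_le_mul_left (a (m + 2)) this
          nlinarith [hyl]
        have hyu' : y' < ∏ k ∈ Finset.Icc (q + 1) (m + 1), a k := by
          by_contra hc
          push_neg at hc
          have := Nat.mul_le_mul_left (a (m + 2)) hc
          nlinarith [hyu]
        have IH := ih (by omega) y' hy'1 hyl' hyu'
        have hinj : Function.Injective (fun t => a (m + 2) * t) :=
          mul_right_injective₀ (by omega)
        have hsub : (fun t => a (m + 2) * t) ''
              {t | t ∈ IndSG a b (m + 1) ∧ t + y' ∉ IndSG a b (m + 1)}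
            ⊆ {t | t ∈ IndSG a b (m + 2) ∧ t + a (m + 2) * y' ∉ IndSG a b (m + 2)} := by
          rintro _ ⟨t, ⟨htΓ, htn⟩, rfl⟩
          refine ⟨mem_mul a b htΓ, fun hmem => ?_⟩
          have heq : a (m + 2) * t + a (m + 2) * y' = a (m + 2) * (t + y') := by ring
          rw [heq] at hmem
          rcases hmem with ⟨w, hw, hweq⟩ | htop
          · simp only at hweq
            have : w = t + y' := by
              have := mul_right_injective₀ (show a (m + 2) ≠ 0 by omega) hweq
              exact this
            subst this
            exact htn hw
          · simp only [Set.mem_setOf_eq] at htop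
            have hble : b (m + 2) ≤ t + y' := by
              by_contra hc
              push_neg at hc
              have := Nat.mul_le_mul_left (a (m + 2)) (show t + y' + 1 ≤ b (m + 2) by omega)
              nlinarith
            have : a (m + 1) * b (m + 1) ≤ t + y' :=
              le_trans (hb (m + 1) (by omega) (by omega)) hble
            exact htn (mem_top a b this)
        calc {s | s ∈ IndSG a b q ∧ s < b (q + 1)}.ncard
            ≤ {t | t ∈ IndSG a b (m + 1) ∧ t + y' ∉ IndSG a b (m + 1)}.ncard := IH
          _ = ((fun t => a (m + 2) * t) ''
                {t | t ∈ IndSG a b (m + 1) ∧ t + y' ∉ IndSG a b (m + 1)}).ncard :=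
              (Set.ncard_image_of_injective _ hinj).symm
          _ ≤ _ := Set.ncard_le_ncard hsub (Efin a b (m + 1) _)
      · -- a (m+2) does not divide y : direct witnesses
        set P := ∏ k ∈ Finset.Icc (q + 1) (m + 2), a k with hP
        have hPsplit : P = (∏ k ∈ Finset.Icc (q + 1) (m + 1), a k) * a (m + 2) :=
          Finset.prod_Icc_succ_top (by omega) _
        have hPpos : 0 < P := by
          rw [hP]
          apply Finset.prod_pos
          intro k hk
          simp only [Finset.mem_Icc] at hk
          have := ha k (by omega) (by omega)
          omega
        have hinj : Function.Injective (fun s => P * s) :=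
          mul_right_injective₀ (by omega)
        have hPb : P * b (q + 1) ≤ a (m + 2) * b (m + 2) := by
          have h1 := bchain a b ha hb q (m + 2) (by omega) hjn
          have h2 : Finset.Ico (q + 1) (m + 2) = Finset.Icc (q + 1) (m + 1) :=
            Finset.Ico_add_one_right_eq_Icc _ _
          rw [h2] at h1
          calc P * b (q + 1)
              = a (m + 2) * ((∏ k ∈ Finset.Icc (q + 1) (m + 1), a k) * b (q + 1)) := by
                rw [hPsplit]; ring
            _ ≤ a (m + 2) * b (m + 2) := Nat.mul_le_mul_left _ h1
        have hsub : (fun s => P * s) '' {s | s ∈ IndSG a b q ∧ s < b (q + 1)}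
            ⊆ {t | t ∈ IndSG a b (m + 2) ∧ t + y ∉ IndSG a b (m + 2)} := by
          rintro _ ⟨s, ⟨hsΓ, hsb⟩, rfl⟩
          refine ⟨?_, fun hmem => ?_⟩
          · exact prod_mul_mem a b q (m + 2) (by omega) s hsΓ
          · rcases hmem with ⟨w, hw, hweq⟩ | htop
            · -- would give a (m+2) ∣ y
              simp only at hweq
              rw [show m + 1 + 1 = m + 2 from rfl] at hweq
              apply hdvd
              have hPs : P * s = a (m + 2) * ((∏ k ∈ Finset.Icc (q + 1) (m + 1), a k) * s) := by
                rw [hPsplit]; ring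
              rw [hPs] at hweq
              set u := (∏ k ∈ Finset.Icc (q + 1) (m + 1), a k) * s with hu
              -- a(m+2)*w = a(m+2)*u + y
              have huw : u ≤ w := by
                by_contra hc
                push_neg at hc
                have := Nat.mul_le_mul_left (a (m + 2)) (show w + 1 ≤ u by omega)
                nlinarith
              refine ⟨w - u, ?_⟩
              have : a (m + 2) * w = a (m + 2) * u + a (m + 2) * (w - u) := by
                rw [← Nat.mul_add]
                congr 1
                omega
              omega
            · simp only [Set.mem_setOf_eq] at htop
              rw [show m + 1 + 1 = m + 2 from rfl] at htop
              -- P*s + y < P*b(q+1) ≤ a(m+2)*b(m+2)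
              have h1 : s + 1 ≤ b (q + 1) := hsb
              have h2 : P * (s + 1) ≤ P * b (q + 1) := Nat.mul_le_mul_left _ h1
              have h3 : P * (s + 1) = P * s + P := by ring
              have hyP : y < P := by rw [hPsplit]; exact hyu
              omega
        calc {s | s ∈ IndSG a b q ∧ s < b (q + 1)}.ncard
            = ((fun s => P * s) '' {s | s ∈ IndSG a b q ∧ s < b (q + 1)}).ncard :=
              (Set.ncard_image_of_injective _ hinj).symm
          _ ≤ _ := Set.ncard_le_ncard hsub (Efin a b (m + 1) y)

lemma apcard (m x : ℕ) :
    (Ap (IndSG a b (m + 1)) x).ncard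
      = x + {t | t ∈ IndSG a b (m + 1) ∧ t + x ∉ IndSG a b (m + 1)}.ncard := by
  classical
  set Γ := IndSG a b (m + 1) with hΓ
  set c := a (m + 1) * b (m + 1) with hc
  have hcond : ∀ z, c ≤ z → z ∈ Γ := fun z hz => Or.inr hz
  set S : Finset ℕ := (Finset.range (x + c)).filter (· ∈ Γ) with hS
  set T : Finset ℕ := ((Finset.range c).filter (· ∈ Γ)).image (· + x) with hT
  have hAp : Ap Γ x = ↑(S \ T) := by
    ext s
    simp only [Ap, Set.mem_setOf_eq, Finset.coe_sdiff, Set.mem_diff, Finset.mem_coe,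
      hS, hT, Finset.mem_filter, Finset.mem_range, Finset.mem_image]
    constructor
    · rintro ⟨hsΓ, h⟩
      refine ⟨⟨?_, hsΓ⟩, ?_⟩
      · by_contra hge
        push_neg at hge
        exact h (s - x) (hcond _ (by omega)) (by omega)
      · rintro ⟨u, ⟨hu, huΓ⟩, rfl⟩
        exact h u huΓ rfl
    · rintro ⟨⟨hlt, hsΓ⟩, hnot⟩
      refine ⟨hsΓ, fun t htΓ hst => ?_⟩
      exact hnot ⟨t, ⟨by omega, htΓ⟩, hst.symm⟩
  have hcards : (S \ T).card + T.card = (T \ S).card + S.card := by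
    rw [Finset.card_sdiff_add_card, Finset.card_sdiff_add_card, Finset.union_comm]
  have hST : S.card = ((Finset.range c).filter (· ∈ Γ)).card + x := by
    have hsplit : S = ((Finset.range c).filter (· ∈ Γ)) ∪ Finset.Ico c (x + c) := by
      ext z
      simp only [hS, Finset.mem_filter, Finset.mem_range, Finset.mem_union, Finset.mem_Ico]
      constructor
      · rintro ⟨hz, hzΓ⟩
        rcases lt_or_ge z c with h | h
        · exact Or.inl ⟨h, hzΓ⟩
        · exact Or.inr ⟨h, hz⟩
      · rintro (⟨h, hzΓ⟩ | ⟨h1, h2⟩)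
        · exact ⟨by omega, hzΓ⟩
        · exact ⟨h2, hcond z h1⟩
    have hdisj : Disjoint ((Finset.range c).filter (· ∈ Γ)) (Finset.Ico c (x + c)) := by
      rw [Finset.disjoint_left]
      intro z hz1 hz2
      simp only [Finset.mem_filter, Finset.mem_range] at hz1
      simp only [Finset.mem_Ico] at hz2
      omega
    rw [hsplit, Finset.card_union_of_disjoint hdisj, Nat.card_Ico]
    omega
  have hTc : T.card = ((Finset.range c).filter (· ∈ Γ)).card :=
    Finset.card_image_of_injective _ (add_left_injective x)
  have hTS : (T \ S).card = {t | t ∈ Γ ∧ t + x ∉ Γ}.ncard := by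
    have heq : T \ S = ((Finset.range c).filter (fun u => u ∈ Γ ∧ u + x ∉ Γ)).image (· + x) := by
      ext z
      simp only [hT, hS, Finset.mem_sdiff, Finset.mem_image, Finset.mem_filter, Finset.mem_range]
      constructor
      · rintro ⟨⟨u, ⟨hu, huΓ⟩, rfl⟩, hz⟩
        exact ⟨u, ⟨hu, huΓ, fun hmem => hz ⟨by omega, hmem⟩⟩, rfl⟩
      · rintro ⟨u, ⟨hu, huΓ, hnot⟩, rfl⟩
        exact ⟨⟨u, ⟨hu, huΓ⟩, rfl⟩, fun hz => hnot hz.2⟩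
    have hset : {t | t ∈ Γ ∧ t + x ∉ Γ}
        = ↑((Finset.range c).filter (fun u => u ∈ Γ ∧ u + x ∉ Γ)) := by
      ext t
      simp only [Set.mem_setOf_eq, Finset.coe_filter, Finset.mem_range, Set.mem_setOf_eq]
      constructor
      · rintro ⟨h1, h2⟩
        have htc : t + x < c := by
          by_contra hge
          exact h2 (hcond _ (by omega))
        exact ⟨by omega, h1, h2⟩
      · rintro ⟨_, h1, h2⟩; exact ⟨h1, h2⟩
    rw [heq, Finset.card_image_of_injective _ (add_left_injective x), hset,
      Set.ncard_coe_finset]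
  rw [hAp, Set.ncard_coe_finset]
  omega

lemma UB (ha : ∀ i, 1 ≤ i → i ≤ n → 2 ≤ a i) (q : ℕ) :
    ∀ j, q + 1 ≤ j → j ≤ n →
      {t | t ∈ IndSG a b j ∧ t + (∏ k ∈ Finset.Icc (q + 2) j, a k) ∉ IndSG a b j}.ncard
        ≤ {s | s ∈ IndSG a b q ∧ s < b (q + 1)}.ncard := by
  intro j hj
  induction j, hj using Nat.le_induction with
  | base =>
      intro hjn
      rw [Finset.Icc_eq_empty (by omega), Finset.prod_empty]
      have haq : 2 ≤ a (q + 1) := ha (q + 1) (by omega) hjn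
      have hinj : Function.Injective (fun s => a (q + 1) * s) :=
        mul_right_injective₀ (by omega)
      have hsub : {t | t ∈ IndSG a b (q + 1) ∧ t + 1 ∉ IndSG a b (q + 1)}
          ⊆ (fun s => a (q + 1) * s) '' {s | s ∈ IndSG a b q ∧ s < b (q + 1)} := by
        rintro t ⟨htΓ, htn⟩
        have ht1 : t + 1 < a (q + 1) * b (q + 1) := lt_of_notMem a b htn
        obtain ⟨w, hw, rfl⟩ := eq_mul_of_mem_lt a b htΓ (by omega)
        refine ⟨w, ⟨hw, ?_⟩, rfl⟩
        exact Nat.lt_of_mul_lt_mul_left (show a (q + 1) * w < a (q + 1) * b (q + 1) by omega)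
      calc {t | t ∈ IndSG a b (q + 1) ∧ t + 1 ∉ IndSG a b (q + 1)}.ncard
          ≤ ((fun s => a (q + 1) * s) '' {s | s ∈ IndSG a b q ∧ s < b (q + 1)}).ncard :=
            Set.ncard_le_ncard hsub ((Nfin a b q).image _)
        _ = _ := Set.ncard_image_of_injective _ hinj
  | succ j hj ih =>
      intro hjn
      obtain ⟨m, rfl⟩ : ∃ m, j = m + 1 := ⟨j - 1, by omega⟩
      rw [Finset.prod_Icc_succ_top (show q + 2 ≤ m + 1 + 1 by omega)]
      set x' := ∏ k ∈ Finset.Icc (q + 2) (m + 1), a k with hx'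
      have haj : 2 ≤ a (m + 2) := ha (m + 2) (by omega) hjn
      have hinj : Function.Injective (fun t => a (m + 2) * t) :=
        mul_right_injective₀ (by omega)
      have hsub : {t | t ∈ IndSG a b (m + 2) ∧ t + x' * a (m + 2) ∉ IndSG a b (m + 2)}
          ⊆ (fun t => a (m + 2) * t) ''
            {t | t ∈ IndSG a b (m + 1) ∧ t + x' ∉ IndSG a b (m + 1)} := by
        rintro t ⟨htΓ, htn⟩
        have ht1 : t + x' * a (m + 2) < a (m + 2) * b (m + 2) := lt_of_notMem a b htn
        obtain ⟨w, hw, rfl⟩ := eq_mul_of_mem_lt a b htΓ (show t < a (m + 2) * b (m + 2) by omega)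
        refine ⟨w, ⟨hw, fun hmem => ?_⟩, rfl⟩
        apply htn
        have heq : a (m + 2) * w + x' * a (m + 2) = a (m + 2) * (w + x') := by ring
        rw [heq]
        exact mem_mul a b hmem
      calc {t | t ∈ IndSG a b (m + 2) ∧ t + x' * a (m + 2) ∉ IndSG a b (m + 2)}.ncard
          ≤ ((fun t => a (m + 2) * t) ''
              {t | t ∈ IndSG a b (m + 1) ∧ t + x' ∉ IndSG a b (m + 1)}).ncard :=
            Set.ncard_le_ncard hsub ((Efin a b m x').image _)
        _ = {t | t ∈ IndSG a b (m + 1) ∧ t + x' ∉ IndSG a b (m + 1)}.ncard :=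
            Set.ncard_image_of_injective _ hinj
        _ ≤ _ := ih (by omega)


end StmtAux

theorem stmt5 (n : ℕ) (hn : 1 ≤ n) (a b : ℕ → ℕ)
    (ha : ∀ i, 1 ≤ i → i ≤ n → 2 ≤ a i)
    (hb1 : 1 ≤ b 1)
    (hb : ∀ i, 1 ≤ i → i + 1 ≤ n → a i * b i ≤ b (i + 1))
    (A : ℕ → ℕ) (hA : ∀ i, A i = ∏ j ∈ Finset.Icc i n, a j)
    (i : ℕ) (hi1 : 2 ≤ i) (hi2 : i ≤ n) :
    sInf {m | ∃ x, A i ≤ x ∧ x ≤ A (i - 1) - 1 ∧ m = (Ap (IndSG a b n) x).ncard}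
      = (Ap (IndSG a b n) (A i)).ncard := by
  classical
  obtain ⟨q, rfl⟩ : ∃ q, i = q + 2 := ⟨i - 2, by omega⟩
  obtain ⟨m0, rfl⟩ : ∃ m0, n = m0 + 1 := ⟨n - 1, by omega⟩
  have hAi : A (q + 2) = ∏ k ∈ Finset.Icc (q + 2) (m0 + 1), a k := hA _
  have hAi1 : A (q + 2 - 1) = ∏ k ∈ Finset.Icc (q + 1) (m0 + 1), a k := by
    rw [show q + 2 - 1 = q + 1 from rfl]
    exact hA _
  have hfac : (∏ k ∈ Finset.Icc (q + 1) (m0 + 1), a k)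
      = a (q + 1) * ∏ k ∈ Finset.Icc (q + 2) (m0 + 1), a k := by
    rw [show Finset.Icc (q + 1) (m0 + 1) = Finset.Ico (q + 1) (m0 + 2) from
          (Finset.Ico_add_one_right_eq_Icc _ _).symm,
        show Finset.Icc (q + 2) (m0 + 1) = Finset.Ico (q + 2) (m0 + 2) from
          (Finset.Ico_add_one_right_eq_Icc _ _).symm,
        Finset.prod_eq_prod_Ico_succ_bot (by omega)]
  have hApos : 0 < A (q + 2) := by
    rw [hAi]
    apply Finset.prod_pos
    intro k hk
    simp only [Finset.mem_Icc] at hk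
    have := ha k (by omega) (by omega)
    omega
  have haq1 : 2 ≤ a (q + 1) := ha (q + 1) (by omega) (by omega)
  have h2A : 2 * A (q + 2) ≤ a (q + 1) * A (q + 2) := Nat.mul_le_mul_right _ haq1
  have hfacA : A (q + 2 - 1) = a (q + 1) * A (q + 2) := by rw [hAi1, hfac, ← hAi]
  have hAlt : A (q + 2) ≤ A (q + 2 - 1) - 1 := by omega
  have hmem : (Ap (IndSG a b (m0 + 1)) (A (q + 2))).ncard
      ∈ {m | ∃ x, A (q + 2) ≤ x ∧ x ≤ A (q + 2 - 1) - 1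
          ∧ m = (Ap (IndSG a b (m0 + 1)) x).ncard} :=
    ⟨A (q + 2), le_refl _, hAlt, rfl⟩
  apply le_antisymm
  · exact Nat.sInf_le hmem
  · apply le_csInf ⟨_, hmem⟩
    rintro mm ⟨x, hx1, hx2, rfl⟩
    have hE1 : (Ap (IndSG a b (m0 + 1)) (A (q + 2))).ncard
        = A (q + 2) + {t | t ∈ IndSG a b (m0 + 1) ∧ t + A (q + 2) ∉ IndSG a b (m0 + 1)}.ncard :=
      StmtAux.apcard a b m0 _
    have hE2 : (Ap (IndSG a b (m0 + 1)) x).ncard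
        = x + {t | t ∈ IndSG a b (m0 + 1) ∧ t + x ∉ IndSG a b (m0 + 1)}.ncard :=
      StmtAux.apcard a b m0 x
    have hUB : {t | t ∈ IndSG a b (m0 + 1) ∧ t + A (q + 2) ∉ IndSG a b (m0 + 1)}.ncard
        ≤ {s | s ∈ IndSG a b q ∧ s < b (q + 1)}.ncard := by
      have h := StmtAux.UB a b ha q (m0 + 1) (by omega) le_rfl
      rwa [← hAi] at h
    have hxP : x < ∏ k ∈ Finset.Icc (q + 1) (m0 + 1), a k := by
      have := hfacA
      omega
    have hLB : {s | s ∈ IndSG a b q ∧ s < b (q + 1)}.ncard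
        ≤ {t | t ∈ IndSG a b (m0 + 1) ∧ t + x ∉ IndSG a b (m0 + 1)}.ncard :=
      StmtAux.LB a b ha hb q (m0 + 1) (by omega) le_rfl x (by omega)
        (by rw [← hAi]; exact hx1) hxP
    omega
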